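/- Let d ≥ 3 and let u be a radial finite-energy free wave with radiation profile g₊ ∈ L²(ℝ), i.e. ∫_0^∞ ( |r^{(d-1)/2}u_r(r,t) + g₊(t-r)|² + |r^{(d-1)/2}u_t(r,t) - g₊(t-r)|² ) dr → 0 as t → +∞, and suppose lim_{t→+∞} ∫_{ℝ^d} |u(x,t)|²/|x|² dx = 0. Then ‖(u₀,u₁)‖²_{Ḣ¹×L²} = 2 c_d ‖g₊‖²_{L²(ℝ)}, where c_d is the area of the unit sphere S^{d-1}. -/

import Mathlib

open MeasureTheory Real Filter
open scoped Topology

lemma sq_le_aux (ε a b : ℝ) (hε : 0 < ε) : a^2 ≤ (1+ε) * b^2 + (1+ε⁻¹) * (a - b)^2 := by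
  have h1 : ε * ε⁻¹ = 1 := mul_inv_cancel₀ hε.ne'
  nlinarith [mul_nonneg (inv_nonneg.mpr hε.le) (sq_nonneg ((a-b) - ε * b)), sq_nonneg (a-b),
    sq_nonneg b, hε.le]

/-- Isometry property of the radiation field, radial case: for a radial finite-energy
free wave (written in radial profile form) with radiation profile `g₊ ∈ L²(ℝ)`,
`‖(u₀,u₁)‖²_{Ḣ¹×L²} = 2 c_d ‖g₊‖²_{L²(ℝ)}`, where `c_d = |S^{d-1}|` (expressed below as
`d·vol(B(0,1))`) and the radial norms are `‖(u₀,u₁)‖² = c_d ∫_0^∞ r^{d-1}(u₀'² + u₁²) dr`. -/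
theorem radiation_field_isometry_radial (d : ℕ) (hd : 3 ≤ d)
    (u : ℝ → ℝ → ℝ) (g : ℝ → ℝ)
    (hu : ContDiff ℝ 2 (Function.uncurry u))
    (hg : MemLp g 2 (volume : Measure ℝ))
    (hwave : ∀ (r t : ℝ), 0 < r →
      deriv (fun s => deriv (fun s' => u r s') s) t
        - (deriv (fun r' => deriv (fun r'' => u r'' t) r') r
            + (((d : ℝ) - 1) / r) * deriv (fun r' => u r' t) r) = 0)
    (hfinite : ∀ t : ℝ, IntegrableOn (fun r : ℝ =>
      r ^ ((d : ℝ) - 1) * ((deriv (fun s => u s t) r) ^ 2 + (deriv (u r) t) ^ 2))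
      (Set.Ioi 0))
    (hconserve : ∀ t : ℝ,
      (∫ r in Set.Ioi (0 : ℝ), r ^ ((d : ℝ) - 1) *
          ((deriv (fun s => u s t) r) ^ 2 + (deriv (u r) t) ^ 2))
      = ∫ r in Set.Ioi (0 : ℝ), r ^ ((d : ℝ) - 1) *
          ((deriv (fun s => u s 0) r) ^ 2 + (deriv (u r) 0) ^ 2))
    (hradiation : Tendsto (fun t : ℝ =>
        ∫ r in Set.Ioi (0 : ℝ),
          ((r ^ (((d : ℝ) - 1) / 2) * deriv (fun s => u s t) r + g (t - r)) ^ 2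
            + (r ^ (((d : ℝ) - 1) / 2) * deriv (u r) t - g (t - r)) ^ 2))
      atTop (nhds 0))
    (hhardy : Tendsto (fun t : ℝ =>
        ∫ r in Set.Ioi (0 : ℝ), r ^ ((d : ℝ) - 3) * (u r t) ^ 2)
      atTop (nhds 0)) :
    ((d : ℝ) * (volume (Metric.ball (0 : EuclideanSpace ℝ (Fin d)) 1)).toReal) *
        (∫ r in Set.Ioi (0 : ℝ), r ^ ((d : ℝ) - 1) *
          ((deriv (fun s => u s 0) r) ^ 2 + (deriv (u r) 0) ^ 2))
      = 2 * ((d : ℝ) * (volume (Metric.ball (0 : EuclideanSpace ℝ (Fin d)) 1)).toReal) *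
          ∫ η : ℝ, (g η) ^ 2 := by
  have hd1 : (0:ℝ) ≤ (d:ℝ) - 1 := by
    have : (3:ℝ) ≤ (d:ℝ) := by exact_mod_cast hd
    linarith
  have hd2 : (0:ℝ) ≤ ((d:ℝ) - 1)/2 := by linarith
  set J := ∫ η : ℝ, (g η) ^ 2 with hJdef
  set E0 := ∫ r in Set.Ioi (0 : ℝ), r ^ ((d : ℝ) - 1) *
      ((deriv (fun s => u s 0) r) ^ 2 + (deriv (u r) 0) ^ 2) with hE0def
  suffices h : E0 = 2 * J by rw [h]; ring
  -- derivatives are continuous in r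
  have hu1 : Differentiable ℝ (Function.uncurry u) := hu.differentiable (by norm_num)
  have hcf : Continuous (fun p : ℝ × ℝ => fderiv ℝ (Function.uncurry u) p) :=
    hu.continuous_fderiv (by norm_num)
  have hdr : ∀ t : ℝ, Continuous (fun r => deriv (fun s => u s t) r) := by
    intro t
    have heq : (fun r => deriv (fun s => u s t) r)
        = fun r => fderiv ℝ (Function.uncurry u) (r, t) ((1:ℝ), (0:ℝ)) := by
      funext r
      have h1 : HasDerivAt (fun s : ℝ => (s, t)) ((1:ℝ), (0:ℝ)) r :=
        (hasDerivAt_id r).prodMk (hasDerivAt_const r t)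
      exact ((hu1 (r, t)).hasFDerivAt.comp_hasDerivAt r h1).deriv
    rw [heq]
    exact (hcf.comp (continuous_id.prodMk continuous_const)).clm_apply continuous_const
  have hdt : ∀ t : ℝ, Continuous (fun r => deriv (u r) t) := by
    intro t
    have heq : (fun r => deriv (u r) t)
        = fun r => fderiv ℝ (Function.uncurry u) (r, t) ((0:ℝ), (1:ℝ)) := by
      funext r
      have h1 : HasDerivAt (fun s : ℝ => (r, s)) ((0:ℝ), (1:ℝ)) t :=
        (hasDerivAt_const t r).prodMk (hasDerivAt_id t)
      exact ((hu1 (r, t)).hasFDerivAt.comp_hasDerivAt t h1).deriv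
    rw [heq]
    exact (hcf.comp (continuous_id.prodMk continuous_const)).clm_apply continuous_const
  -- basic measure-theoretic facts about r ↦ t - r
  have hmp : ∀ t : ℝ, MeasurePreserving (fun r : ℝ => t - r) volume volume := fun t =>
    Measure.measurePreserving_sub_left volume t
  have hemb : ∀ t : ℝ, MeasurableEmbedding (fun r : ℝ => t - r) := fun t =>
    (MeasurableEquiv.subLeft t).measurableEmbedding
  have hg2 : Integrable (fun x => g x ^ 2) volume := hg.integrable_sq
  have hG2int : ∀ t : ℝ, IntegrableOn (fun r : ℝ => g (t - r) ^ 2) (Set.Ioi 0) volume := by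
    intro t
    exact (((hmp t).integrable_comp_emb (hemb t)).mpr hg2).integrableOn
  have hIeq : ∀ t : ℝ, (∫ r in Set.Ioi (0:ℝ), g (t - r) ^ 2) = ∫ s in Set.Iio t, g s ^ 2 := by
    intro t
    have hpre : (fun r : ℝ => t - r) ⁻¹' (Set.Iio t) = Set.Ioi 0 := by
      ext r; simp [sub_lt_self_iff]
    rw [← hpre]
    exact (hmp t).setIntegral_preimage_emb (hemb t) (fun x => g x ^ 2) (Set.Iio t)
  have hItend : Tendsto (fun t : ℝ => ∫ s in Set.Iio t, g s ^ 2) atTop (𝓝 J) := by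
    have h := tendsto_setIntegral_of_monotone (μ := volume)
      (f := fun x => g x ^ 2) (s := fun t : ℝ => Set.Iio t)
      (fun t => measurableSet_Iio) (fun a b hab => Set.Iio_subset_Iio hab)
      (by rw [Set.iUnion_Iio]; exact hg2.integrableOn)
    rw [Set.iUnion_Iio] at h
    simpa [setIntegral_univ] using h
  -- pointwise algebraic identity
  have hrpow : ∀ r : ℝ, 0 < r → (r ^ (((d:ℝ) - 1)/2)) ^ 2 = r ^ ((d:ℝ) - 1) := by
    intro r hr
    rw [← Real.rpow_natCast (r ^ (((d:ℝ) - 1)/2)) 2, ← Real.rpow_mul hr.le]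
    congr 1
    push_cast
    ring
  have habe : ∀ t r : ℝ, 0 < r →
      r ^ ((d:ℝ) - 1) * ((deriv (fun s => u s t) r) ^ 2 + (deriv (u r) t) ^ 2)
        = (r ^ (((d:ℝ) - 1)/2) * deriv (fun s => u s t) r) ^ 2
          + (r ^ (((d:ℝ) - 1)/2) * deriv (u r) t) ^ 2 := by
    intro t r hr
    rw [mul_pow, mul_pow, hrpow r hr]
    ring
  -- measurability and integrability of the radiation integrand
  have hgm : ∀ t : ℝ, AEStronglyMeasurable (fun r : ℝ => g (t - r))
      (volume.restrict (Set.Ioi 0)) := by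
    intro t
    exact (((hmp t).aestronglyMeasurable_comp_iff (hemb t)).mpr hg.1).restrict
  have hHmeas : ∀ t : ℝ, AEStronglyMeasurable (fun r : ℝ =>
      ((r ^ (((d : ℝ) - 1) / 2) * deriv (fun s => u s t) r + g (t - r)) ^ 2
        + (r ^ (((d : ℝ) - 1) / 2) * deriv (u r) t - g (t - r)) ^ 2))
      (volume.restrict (Set.Ioi 0)) := by
    intro t
    have hA : Continuous (fun r : ℝ => r ^ (((d:ℝ) - 1)/2) * deriv (fun s => u s t) r) :=
      (Real.continuous_rpow_const hd2).mul (hdr t)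
    have hB : Continuous (fun r : ℝ => r ^ (((d:ℝ) - 1)/2) * deriv (u r) t) :=
      (Real.continuous_rpow_const hd2).mul (hdt t)
    have h1 := hA.aestronglyMeasurable.add (hgm t)
    have h2 := hB.aestronglyMeasurable.sub (hgm t)
    refine ((h1.mul h1).add (h2.mul h2)).congr (ae_of_all _ fun r => ?_)
    simp only [Pi.add_apply, Pi.mul_apply, Pi.sub_apply]
    ring
  have hHint : ∀ t : ℝ, IntegrableOn (fun r : ℝ =>
      ((r ^ (((d : ℝ) - 1) / 2) * deriv (fun s => u s t) r + g (t - r)) ^ 2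
        + (r ^ (((d : ℝ) - 1) / 2) * deriv (u r) t - g (t - r)) ^ 2)) (Set.Ioi 0) := by
    intro t
    refine Integrable.mono' (((hfinite t).const_mul 2).add ((hG2int t).const_mul 4))
      (hHmeas t) ?_
    refine (ae_restrict_iff' measurableSet_Ioi).mpr (ae_of_all _ fun r hr => ?_)
    have hab := habe t r hr
    rw [Real.norm_eq_abs, abs_of_nonneg (by positivity)]
    simp only [Pi.add_apply]
    nlinarith [sq_nonneg (r ^ (((d:ℝ) - 1)/2) * deriv (fun s => u s t) r - g (t - r)),
      sq_nonneg (r ^ (((d:ℝ) - 1)/2) * deriv (u r) t + g (t - r)), hab]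
  -- the two key quantitative inequalities
  have hstep1 : ∀ ε : ℝ, 0 < ε → ∀ t : ℝ, E0 ≤ (1+ε) * (2 * ∫ s in Set.Iio t, g s ^ 2)
      + (1+ε⁻¹) * ∫ r in Set.Ioi (0 : ℝ),
        ((r ^ (((d : ℝ) - 1) / 2) * deriv (fun s => u s t) r + g (t - r)) ^ 2
          + (r ^ (((d : ℝ) - 1) / 2) * deriv (u r) t - g (t - r)) ^ 2) := by
    intro ε hε t
    have hpt : ∀ r ∈ Set.Ioi (0:ℝ),
        r ^ ((d : ℝ) - 1) * ((deriv (fun s => u s t) r) ^ 2 + (deriv (u r) t) ^ 2)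
        ≤ (1+ε) * (2 * g (t - r) ^ 2) + (1+ε⁻¹) *
          ((r ^ (((d : ℝ) - 1) / 2) * deriv (fun s => u s t) r + g (t - r)) ^ 2
            + (r ^ (((d : ℝ) - 1) / 2) * deriv (u r) t - g (t - r)) ^ 2) := by
      intro r hr
      rw [habe t r hr]
      have h1 := sq_le_aux ε (r ^ (((d:ℝ) - 1)/2) * deriv (fun s => u s t) r) (-(g (t - r))) hε
      have h2 := sq_le_aux ε (r ^ (((d:ℝ) - 1)/2) * deriv (u r) t) (g (t - r)) hε
      nlinarith [h1, h2]
    have hmono := setIntegral_mono_on (hfinite t)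
      ((((hG2int t).const_mul 2).const_mul (1+ε)).add ((hHint t).const_mul (1+ε⁻¹)))
      measurableSet_Ioi hpt
    simp only [Pi.add_apply] at hmono
    rw [integral_add (((hG2int t).const_mul 2).const_mul (1+ε))
      ((hHint t).const_mul (1+ε⁻¹))] at hmono
    simp only [integral_const_mul] at hmono
    rw [hIeq t, hconserve t] at hmono
    exact hmono
  have hstep2 : ∀ ε : ℝ, 0 < ε → ∀ t : ℝ, 2 * (∫ s in Set.Iio t, g s ^ 2)
      ≤ (1+ε) * E0 + (1+ε⁻¹) * ∫ r in Set.Ioi (0 : ℝ),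
        ((r ^ (((d : ℝ) - 1) / 2) * deriv (fun s => u s t) r + g (t - r)) ^ 2
          + (r ^ (((d : ℝ) - 1) / 2) * deriv (u r) t - g (t - r)) ^ 2) := by
    intro ε hε t
    have hpt : ∀ r ∈ Set.Ioi (0:ℝ),
        2 * g (t - r) ^ 2
        ≤ (1+ε) * (r ^ ((d : ℝ) - 1) * ((deriv (fun s => u s t) r) ^ 2 + (deriv (u r) t) ^ 2))
          + (1+ε⁻¹) *
          ((r ^ (((d : ℝ) - 1) / 2) * deriv (fun s => u s t) r + g (t - r)) ^ 2
            + (r ^ (((d : ℝ) - 1) / 2) * deriv (u r) t - g (t - r)) ^ 2) := by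
      intro r hr
      rw [habe t r hr]
      have h1 := sq_le_aux ε (g (t - r))
        (-(r ^ (((d:ℝ) - 1)/2) * deriv (fun s => u s t) r)) hε
      have h2 := sq_le_aux ε (g (t - r)) (r ^ (((d:ℝ) - 1)/2) * deriv (u r) t) hε
      nlinarith [h1, h2]
    have hmono := setIntegral_mono_on ((hG2int t).const_mul 2)
      (((hfinite t).const_mul (1+ε)).add ((hHint t).const_mul (1+ε⁻¹)))
      measurableSet_Ioi hpt
    simp only [Pi.add_apply] at hmono
    rw [integral_add ((hfinite t).const_mul (1+ε)) ((hHint t).const_mul (1+ε⁻¹))] at hmono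
    simp only [integral_const_mul] at hmono
    rw [hIeq t, hconserve t] at hmono
    exact hmono
  -- pass to the limit t → ∞
  have h1 : ∀ ε : ℝ, 0 < ε → E0 ≤ (1+ε) * (2 * J) := by
    intro ε hε
    have hT : Tendsto (fun t : ℝ => (1+ε) * (2 * ∫ s in Set.Iio t, g s ^ 2)
        + (1+ε⁻¹) * ∫ r in Set.Ioi (0 : ℝ),
          ((r ^ (((d : ℝ) - 1) / 2) * deriv (fun s => u s t) r + g (t - r)) ^ 2
            + (r ^ (((d : ℝ) - 1) / 2) * deriv (u r) t - g (t - r)) ^ 2))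
        atTop (𝓝 ((1+ε) * (2 * J) + (1+ε⁻¹) * 0)) :=
      ((hItend.const_mul 2).const_mul (1+ε)).add (hradiation.const_mul (1+ε⁻¹))
    have := le_of_tendsto_of_tendsto' tendsto_const_nhds hT (hstep1 ε hε)
    simpa using this
  have h2 : ∀ ε : ℝ, 0 < ε → 2 * J ≤ (1+ε) * E0 := by
    intro ε hε
    have hT : Tendsto (fun t : ℝ => (1+ε) * E0
        + (1+ε⁻¹) * ∫ r in Set.Ioi (0 : ℝ),
          ((r ^ (((d : ℝ) - 1) / 2) * deriv (fun s => u s t) r + g (t - r)) ^ 2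
            + (r ^ (((d : ℝ) - 1) / 2) * deriv (u r) t - g (t - r)) ^ 2))
        atTop (𝓝 ((1+ε) * E0 + (1+ε⁻¹) * 0)) :=
      tendsto_const_nhds.add (hradiation.const_mul (1+ε⁻¹))
    have := le_of_tendsto_of_tendsto' (hItend.const_mul 2) hT (hstep2 ε hε)
    simpa using this
  -- let ε → 0⁺
  have hle1 : E0 ≤ 2 * J := by
    have hT : Tendsto (fun ε : ℝ => (1+ε) * (2 * J)) (nhdsWithin 0 (Set.Ioi 0)) (𝓝 (2 * J)) := by
      have h : Tendsto (fun ε : ℝ => (1+ε) * (2 * J)) (𝓝 0) (𝓝 ((1+(0:ℝ)) * (2 * J))) :=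
        ((continuous_const.add continuous_id).mul continuous_const).tendsto 0
      rw [show (1+(0:ℝ)) * (2 * J) = 2 * J by ring] at h
      exact h.mono_left nhdsWithin_le_nhds
    exact ge_of_tendsto hT (eventually_nhdsWithin_of_forall fun ε hε => h1 ε hε)
  have hle2 : 2 * J ≤ E0 := by
    have hT : Tendsto (fun ε : ℝ => (1+ε) * E0) (nhdsWithin 0 (Set.Ioi 0)) (𝓝 E0) := by
      have h : Tendsto (fun ε : ℝ => (1+ε) * E0) (𝓝 0) (𝓝 ((1+(0:ℝ)) * E0)) :=
        ((continuous_const.add continuous_id).mul continuous_const).tendsto 0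
      rw [show (1+(0:ℝ)) * E0 = E0 by ring] at h
      exact h.mono_left nhdsWithin_le_nhds
    exact ge_of_tendsto hT (eventually_nhdsWithin_of_forall fun ε hε => h2 ε hε)
  linarith
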